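/- Let φ be an indecomposable 𝔖∞-central state on G = Γ≀𝔖∞ with GNS triple (π, H, ξ), let O_j be the asymptotic transposition, 𝔄_j as defined, P₀^{(j)} the orthogonal projection of H onto ker O_j, and P_±^{(j)} = I − P₀^{(j)}. Then ξ is separating for the algebra P_±^{(j)}·𝔄_j·P_±^{(j)}: if V ∈ 𝔄_j satisfies V = P_±^{(j)}·V·P_±^{(j)} and Vξ = 0, then V = 0. -/

import Mathlib

open scoped Classical ComplexOrder
open Filter Topology

noncomputable section

namespace DN

local notation "⟪" x ", " y "⟫" => @inner ℂ _ _ x y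

/-- The group `𝔖∞` of finitely supported permutations of `ℕ`. -/
def SInf : Subgroup (Equiv.Perm ℕ) where
  carrier := {s | {i | s i ≠ i}.Finite}
  one_mem' := by simp
  mul_mem' := by
    intro s t hs ht
    refine Set.Finite.subset (hs.union ht) fun i hi => ?_
    simp only [Set.mem_setOf_eq, Set.mem_union, Equiv.Perm.mul_apply] at hi ⊢
    by_contra h
    push_neg at h
    rw [h.2, h.1] at hi
    exact hi rfl
  inv_mem' := by
    intro s hs
    refine Set.Finite.subset hs fun i hi => ?_
    simp only [Set.mem_setOf_eq] at hi ⊢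
    intro h
    exact hi (Equiv.Perm.inv_eq_iff_eq.mpr h.symm)

theorem mem_SInf (s : Equiv.Perm ℕ) : s ∈ SInf ↔ {i | s i ≠ i}.Finite := Iff.rfl

/-- The group `Γ^∞_e` of finitely supported sequences in `Γ`. -/
def GammaE (Γ : Type*) [Group Γ] : Subgroup (ℕ → Γ) where
  carrier := {γ | {i | γ i ≠ 1}.Finite}
  one_mem' := by simp
  mul_mem' := by
    intro f g hf hg
    refine Set.Finite.subset (hf.union hg) fun i hi => ?_
    simp only [Set.mem_setOf_eq, Set.mem_union, Pi.mul_apply] at hi ⊢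
    by_contra h
    push_neg at h
    rw [h.1, h.2] at hi
    exact hi (one_mul 1)
  inv_mem' := by
    intro f hf
    refine Set.Finite.subset hf fun i hi => ?_
    simp only [Set.mem_setOf_eq, Pi.inv_apply, ne_eq, inv_eq_one] at hi ⊢
    exact hi

theorem mem_GammaE {Γ : Type*} [Group Γ] (γ : ℕ → Γ) :
    γ ∈ GammaE Γ ↔ {i | γ i ≠ 1}.Finite := Iff.rfl

/-- The permutation action of `Equiv.Perm ℕ` on `ℕ → Γ`. -/
def permMulAut (Γ : Type*) [Group Γ] (s : Equiv.Perm ℕ) : MulAut (ℕ → Γ) where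
  toFun γ := γ ∘ s.symm
  invFun γ := γ ∘ s
  left_inv γ := by funext i; simp [Function.comp]
  right_inv γ := by funext i; simp [Function.comp]
  map_mul' γ δ := rfl

def permAction (Γ : Type*) [Group Γ] : Equiv.Perm ℕ →* MulAut (ℕ → Γ) where
  toFun := permMulAut Γ
  map_one' := by ext γ i; rfl
  map_mul' s t := by ext γ i; rfl

/-- The (big) wreath product `(ℕ → Γ) ⋊ Perm ℕ`. -/
abbrev W (Γ : Type*) [Group Γ] := (ℕ → Γ) ⋊[permAction Γ] Equiv.Perm ℕ

/-- The wreath product `G = Γ ≀ 𝔖∞`, as the subgroup of `W Γ` of finitely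
supported elements. -/
def WG (Γ : Type*) [Group Γ] : Subgroup (W Γ) where
  carrier := {g | {i | g.right i ≠ i}.Finite ∧ {i | g.left i ≠ 1}.Finite}
  one_mem' := by
    constructor
    · convert Set.finite_empty using 1
      ext i; simp
    · convert Set.finite_empty using 1
      ext i; simp
  mul_mem' := by
    rintro a b ⟨ha1, ha2⟩ ⟨hb1, hb2⟩
    constructor
    · refine Set.Finite.subset (ha1.union hb1) fun i hi => ?_
      simp only [Set.mem_setOf_eq, Set.mem_union, SemidirectProduct.mul_right,
        Equiv.Perm.mul_apply] at hi ⊢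
      by_contra h
      push_neg at h
      rw [h.2, h.1] at hi
      exact hi rfl
    · refine Set.Finite.subset (ha2.union (hb2.image a.right)) fun i hi => ?_
      simp only [Set.mem_setOf_eq, SemidirectProduct.mul_left, Pi.mul_apply] at hi
      by_contra h
      simp only [Set.mem_union, Set.mem_setOf_eq, Set.mem_image, not_or, not_exists,
        not_and, not_not] at h
      obtain ⟨h1, h2⟩ := h
      apply hi
      have hb : b.left (a.right⁻¹ i) = 1 := by
        by_contra hc
        exact h2 (a.right⁻¹ i) hc (by simp)
      have hrfl : (permAction Γ a.right b.left) i = b.left (a.right⁻¹ i) := rfl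
      rw [h1, one_mul, hrfl, hb]
  inv_mem' := by
    rintro a ⟨ha1, ha2⟩
    constructor
    · refine Set.Finite.subset ha1 fun i hi => ?_
      simp only [Set.mem_setOf_eq, SemidirectProduct.inv_right] at hi ⊢
      intro h
      exact hi (Equiv.Perm.inv_eq_iff_eq.mpr h.symm)
    · refine Set.Finite.subset (Set.Finite.preimage (a.right.injective.injOn) ha2)
        fun i hi => ?_
      simp only [Set.mem_setOf_eq] at hi
      simp only [Set.mem_preimage, Set.mem_setOf_eq]
      intro h
      apply hi
      have hrfl : (a⁻¹).left i = (a.left (a.right i))⁻¹ := rfl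
      rw [hrfl, h, inv_one]

theorem mem_WG {Γ : Type*} [Group Γ] (g : W Γ) :
    g ∈ WG Γ ↔ {i | g.right i ≠ i}.Finite ∧ {i | g.left i ≠ 1}.Finite := Iff.rfl

/-- The canonical copy of `𝔖∞` inside `Γ ≀ 𝔖∞`. -/
def permW {Γ : Type*} [Group Γ] (s : SInf) : WG Γ :=
  ⟨SemidirectProduct.inr s.1, by
    rw [mem_WG]
    constructor
    · have h : (SemidirectProduct.inr s.1 : W Γ).right = s.1 := SemidirectProduct.right_inr _
      rw [h]
      exact s.2
    · convert Set.finite_empty using 1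
      ext i; simp⟩

/-- The canonical copy of `Γ^∞_e` inside `Γ ≀ 𝔖∞`. -/
def seqW {Γ : Type*} [Group Γ] (γ : GammaE Γ) : WG Γ :=
  ⟨SemidirectProduct.inl γ.1, by
    rw [mem_WG]
    constructor
    · convert Set.finite_empty using 1
      ext i; simp
    · have h : (SemidirectProduct.inl γ.1 : W Γ).left = γ.1 := SemidirectProduct.left_inl _
      rw [h]
      exact γ.2⟩

/-- The support of an element of `Γ ≀ 𝔖∞`. -/
def supp {Γ : Type*} [Group Γ] (g : WG Γ) : Set ℕ :=
  {i | (g : W Γ).right i ≠ i ∨ (g : W Γ).left i ≠ 1}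

/-- Positive definiteness of a function on a group. -/
def IsPosDef {G : Type*} [Group G] (φ : G → ℂ) : Prop :=
  ∀ (m : ℕ) (g : Fin m → G) (c : Fin m → ℂ),
    0 ≤ ∑ i, ∑ j, c i * (starRingEnd ℂ) (c j) * φ ((g j)⁻¹ * g i)

/-- A state on a group: normalized positive definite function. -/
def IsState {G : Type*} [Group G] (φ : G → ℂ) : Prop := φ 1 = 1 ∧ IsPosDef φ

/-- `𝔖∞`-centrality of a function on `Γ ≀ 𝔖∞`. -/
def IsSCentral {Γ : Type*} [Group Γ] (φ : WG Γ → ℂ) : Prop :=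
  ∀ (s : SInf) (g : WG Γ), φ (permW s * g * (permW s)⁻¹) = φ g

/-- The commutant of a set of bounded operators. -/
def commutant {H : Type*} [NormedAddCommGroup H] [InnerProductSpace ℂ H]
    (S : Set (H →L[ℂ] H)) : Set (H →L[ℂ] H) := {T | ∀ A ∈ S, T * A = A * T}

variable {Γ : Type*} [Group Γ]
variable {H : Type*} [NormedAddCommGroup H] [InnerProductSpace ℂ H] [CompleteSpace H]

/-- The image set `π(G)` of a representation. -/
def repSet (π : WG Γ →* (H →L[ℂ] H)) : Set (H →L[ℂ] H) := Set.range fun g : WG Γ => π g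

/-- The von Neumann algebra `π(G)''` (double commutant). -/
def vN (π : WG Γ →* (H →L[ℂ] H)) : Set (H →L[ℂ] H) := commutant (commutant (repSet π))

/-- The representation is factorial: the center `π(G)' ∩ π(G)''` consists of scalars. -/
def IsFactorial (π : WG Γ →* (H →L[ℂ] H)) : Prop :=
  ∀ T ∈ commutant (repSet π) ∩ vN π, ∃ c : ℂ, T = c • (1 : H →L[ℂ] H)

/-- `(π, H, ξ)` is a GNS triple for `φ`. -/
structure IsGNS (φ : WG Γ → ℂ) (π : WG Γ →* (H →L[ℂ] H)) (ξ : H) : Prop where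
  unitary : ∀ g, π g ∈ unitary (H →L[ℂ] H)
  norm_one : ‖ξ‖ = 1
  cyclic : Dense ((Submodule.span ℂ (Set.range fun g : WG Γ => π g ξ) : Submodule ℂ H) : Set H)
  inner_eq : ∀ g, φ g = ⟪ξ, π g ξ⟫

theorem swap_mem_SInf (a b : ℕ) : Equiv.swap a b ∈ SInf := by
  rw [mem_SInf]
  refine Set.Finite.subset ((Set.finite_singleton a).insert b) fun i hi => ?_
  simp only [Set.mem_setOf_eq] at hi
  simp only [Set.mem_insert_iff, Set.mem_singleton_iff]
  by_contra h
  push_neg at h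
  exact hi (Equiv.swap_apply_of_ne_of_ne h.2 h.1)

/-- The transposition `(a b)` as an element of `Γ ≀ 𝔖∞`. -/
def swapW {Γ : Type*} [Group Γ] (a b : ℕ) : WG Γ := permW ⟨Equiv.swap a b, swap_mem_SInf a b⟩

def omegaFun (n i : ℕ) : ℕ := if i < n then i + n else if i < 2 * n then i - n else i

theorem omegaFun_invol (n i : ℕ) : omegaFun n (omegaFun n i) = i := by
  unfold omegaFun
  split_ifs <;> first | contradiction | omega

/-- Olshanski's permutation `ω_n`. -/
def omegaPerm (n : ℕ) : Equiv.Perm ℕ :=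
  ⟨omegaFun n, omegaFun n, omegaFun_invol n, omegaFun_invol n⟩

theorem omegaPerm_mem (n : ℕ) : omegaPerm n ∈ SInf := by
  rw [mem_SInf]
  refine Set.Finite.subset (Set.finite_Iio (2 * n)) fun i hi => ?_
  simp only [Set.mem_setOf_eq] at hi
  simp only [Set.mem_Iio]
  by_contra h
  push_neg at h
  apply hi
  show omegaFun n i = i
  unfold omegaFun
  split_ifs <;> first | contradiction | omega

/-- `ω_n` as an element of `Γ ≀ 𝔖∞`. -/
def omegaW {Γ : Type*} [Group Γ] (n : ℕ) : WG Γ := permW ⟨omegaPerm n, omegaPerm_mem n⟩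

def sigmaFun (n i : ℕ) : ℕ := if i + 1 < n then i + 1 else if i + 1 = n then 0 else i

def sigmaInvFun (n i : ℕ) : ℕ := if i < n then (if i = 0 then n - 1 else i - 1) else i

theorem sigma_left_inv (n i : ℕ) : sigmaInvFun n (sigmaFun n i) = i := by
  unfold sigmaFun sigmaInvFun
  split_ifs <;> first | contradiction | omega

theorem sigma_right_inv (n i : ℕ) : sigmaFun n (sigmaInvFun n i) = i := by
  unfold sigmaFun sigmaInvFun
  split_ifs <;> first | contradiction | omega

/-- The cycle `σ_n = (0 1 2 ... n-1)`. -/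
def sigmaPerm (n : ℕ) : Equiv.Perm ℕ :=
  ⟨sigmaFun n, sigmaInvFun n, sigma_left_inv n, sigma_right_inv n⟩

theorem sigmaPerm_mem (n : ℕ) : sigmaPerm n ∈ SInf := by
  rw [mem_SInf]
  refine Set.Finite.subset (Set.finite_Iio n) fun i hi => ?_
  simp only [Set.mem_setOf_eq] at hi
  simp only [Set.mem_Iio]
  by_contra h
  push_neg at h
  apply hi
  show sigmaFun n i = i
  unfold sigmaFun
  split_ifs <;> first | contradiction | omega

/-- The cycle of `s` through the point `i` (the paper's `s_p` for the orbit `p` of `i`). -/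
def cycleAt (s : Equiv.Perm ℕ) (i : ℕ) : Equiv.Perm ℕ where
  toFun j := if s.SameCycle i j then s j else j
  invFun j := if s.SameCycle i j then s⁻¹ j else j
  left_inv j := by
    by_cases h : s.SameCycle i j
    · have h2 : s.SameCycle i (s j) := Equiv.Perm.sameCycle_apply_right.mpr h
      simp [h, h2]
    · simp [h]
  right_inv j := by
    by_cases h : s.SameCycle i j
    · have h2 : s.SameCycle i (s⁻¹ j) := Equiv.Perm.sameCycle_symm_apply_right.mpr h
      simp [h, h2]
    · simp [h]

theorem cycleAt_mem {s : Equiv.Perm ℕ} (hs : s ∈ SInf) (i : ℕ) : cycleAt s i ∈ SInf := by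
  rw [mem_SInf] at hs ⊢
  refine Set.Finite.subset hs fun j hj => ?_
  simp only [Set.mem_setOf_eq] at hj ⊢
  intro h
  apply hj
  show (if s.SameCycle i j then s j else j) = j
  split_ifs with hc
  · exact h
  · rfl

/-- The generalized cycle of `g = sγ` corresponding to the orbit of `i` under `s`. -/
def genCycle {Γ : Type*} [Group Γ] (g : WG Γ) (i : ℕ) : WG Γ :=
  permW ⟨cycleAt (g : W Γ).right i, cycleAt_mem g.2.1 i⟩ *
  seqW ⟨fun k => if ((g : W Γ).right).SameCycle i k then (g : W Γ).left ((g : W Γ).right k)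
      else 1, by
    rw [mem_GammaE]
    refine Set.Finite.subset (Set.Finite.preimage ((g : W Γ).right.injective.injOn) g.2.2)
      fun k hk => ?_
    simp only [Set.mem_setOf_eq] at hk
    simp only [Set.mem_preimage, Set.mem_setOf_eq]
    by_cases hsc : ((g : W Γ).right).SameCycle i k
    · rw [if_pos hsc] at hk; exact hk
    · rw [if_neg hsc] at hk; exact absurd rfl hk⟩

/-- The von Neumann algebra `𝔄_j` generated by `O_j` and the `π(γ)` with `γ` supported at `j`. -/
def Aj (π : WG Γ →* (H →L[ℂ] H)) (O : H →L[ℂ] H) (j : ℕ) : Set (H →L[ℂ] H) :=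
  commutant (commutant
    ({O} ∪ {T | ∃ γ : GammaE Γ, (∀ i, i ≠ j → (γ : ℕ → Γ) i = 1) ∧ T = π (seqW γ)}))


/-! ### Auxiliary lemmas -/

section Aux

variable {Γ : Type*} [Group Γ]

theorem permW_coe (s : SInf) : (permW (Γ := Γ) s : W Γ) = SemidirectProduct.inr (s : Equiv.Perm ℕ) := rfl

theorem seqW_coe (γ : GammaE Γ) : (seqW γ : W Γ) = SemidirectProduct.inl (γ : ℕ → Γ) := rfl

theorem swapW_coe (a b : ℕ) :
    (swapW (Γ := Γ) a b : W Γ) = SemidirectProduct.inr (Equiv.swap a b) := rfl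

theorem swapW_mul_self (a b : ℕ) : swapW (Γ := Γ) a b * swapW a b = 1 := by
  apply Subtype.ext
  rw [Subgroup.coe_mul, Subgroup.coe_one, swapW_coe, ← map_mul, Equiv.swap_mul_self, map_one]

theorem swapW_inv (a b : ℕ) : (swapW (Γ := Γ) a b)⁻¹ = swapW a b :=
  inv_eq_of_mul_eq_one_right (swapW_mul_self a b)

theorem seqW_inv (γ : GammaE Γ) : (seqW γ)⁻¹ = seqW γ⁻¹ := by
  apply Subtype.ext
  show ((seqW γ : W Γ))⁻¹ = (seqW γ⁻¹ : W Γ)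
  rw [seqW_coe, seqW_coe, ← map_inv]
  rfl

theorem permW_inv (s : SInf) : (permW (Γ := Γ) s)⁻¹ = permW s⁻¹ := by
  apply Subtype.ext
  rw [Subgroup.coe_inv, permW_coe, permW_coe, ← map_inv]
  rfl

theorem supp_finite (g : WG Γ) : (supp g).Finite := by
  have h := (mem_WG (Γ := Γ) (g : W Γ)).mp g.2
  exact Set.Finite.subset (h.1.union h.2) (fun i hi => hi)

theorem not_mem_supp {g : WG Γ} {i : ℕ} (h : i ∉ supp g) :
    (g : W Γ).right i = i ∧ (g : W Γ).left i = 1 := by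
  simp only [supp, Set.mem_setOf_eq, not_or, not_not, ne_eq] at h
  exact h

theorem mem_supp_of_right {g : WG Γ} {i : ℕ} (h : (g : W Γ).right i ≠ i) : i ∈ supp g :=
  Or.inl h

theorem supp_swapW (a b : ℕ) : supp (swapW (Γ := Γ) a b) ⊆ {a, b} := by
  intro i hi
  rcases hi with h | h
  · rw [swapW_coe, SemidirectProduct.right_inr] at h
    by_contra hc
    simp only [Set.mem_insert_iff, Set.mem_singleton_iff, not_or] at hc
    exact h (Equiv.swap_apply_of_ne_of_ne hc.1 hc.2)
  · rw [swapW_coe, SemidirectProduct.left_inr] at h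
    exact absurd rfl h

theorem supp_seqW (γ : GammaE Γ) : supp (seqW γ) ⊆ {i | (γ : ℕ → Γ) i ≠ 1} := by
  intro i hi
  rcases hi with h | h
  · rw [seqW_coe, SemidirectProduct.right_inl] at h
    exact absurd rfl h
  · rw [seqW_coe, SemidirectProduct.left_inl] at h
    exact h

/-- Elements of `Γ ≀ 𝔖∞` with disjoint supports commute. -/
theorem commute_of_disjoint {g h : WG Γ} (hd : ∀ i, i ∉ supp g ∨ i ∉ supp h) :
    g * h = h * g := by
  have key : ∀ i, ((g : W Γ).right i = i ∧ (g : W Γ).left i = 1) ∨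
      ((h : W Γ).right i = i ∧ (h : W Γ).left i = 1) := by
    intro i
    rcases hd i with hi | hi
    · exact Or.inl (not_mem_supp hi)
    · exact Or.inr (not_mem_supp hi)
  set s := (g : W Γ).right with hs
  set t := (h : W Γ).right with ht
  set γ := (g : W Γ).left with hγ
  set δ := (h : W Γ).left with hδ
  have hfix : ∀ i, s i = i → s⁻¹ i = i := by
    intro i hi
    exact Equiv.Perm.inv_eq_iff_eq.mpr hi.symm
  have hfixt : ∀ i, t i = i → t⁻¹ i = i := by
    intro i hi
    exact Equiv.Perm.inv_eq_iff_eq.mpr hi.symm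
  apply Subtype.ext
  show (g : W Γ) * (h : W Γ) = (h : W Γ) * (g : W Γ)
  have hright : s * t = t * s := by
    ext i
    simp only [Equiv.Perm.mul_apply]
    rcases key i with ⟨h1, _⟩ | ⟨h1, _⟩
    · -- s i = i
      rw [h1]
      by_cases h2 : t i = i
      · rw [h2, h1]
      · -- t i moved; then s fixes t i
        have h3 : t (t i) ≠ t i := fun hc => h2 (t.injective hc)
        rcases key (t i) with ⟨h4, _⟩ | ⟨h4, _⟩
        · rw [h4]
        · exact absurd h4 h3
    · rw [h1]
      by_cases h2 : s i = i
      · rw [h2, h1]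
      · have h3 : s (s i) ≠ s i := fun hc => h2 (s.injective hc)
        rcases key (s i) with ⟨h4, _⟩ | ⟨h4, _⟩
        · exact absurd h4 h3
        · rw [h4]
  have hleft : ∀ i, γ i * δ (s⁻¹ i) = δ i * γ (t⁻¹ i) := by
    intro i
    rcases key i with ⟨h1, h2⟩ | ⟨h1, h2⟩
    · rw [h2, hfix i h1, one_mul]
      by_cases h3 : t⁻¹ i = i
      · rw [h3, h2, mul_one]
      · have h4 : t (t⁻¹ i) ≠ t⁻¹ i := by
          rw [← Equiv.Perm.mul_apply, mul_inv_cancel, Equiv.Perm.one_apply]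
          exact fun hc => h3 hc.symm
        rcases key (t⁻¹ i) with ⟨_, h5⟩ | ⟨h5, _⟩
        · rw [h5, mul_one]
        · exact absurd h5 h4
    · rw [h2, hfixt i h1, one_mul]
      by_cases h3 : s⁻¹ i = i
      · rw [h3, h2, mul_one]
      · have h4 : s (s⁻¹ i) ≠ s⁻¹ i := by
          rw [← Equiv.Perm.mul_apply, mul_inv_cancel, Equiv.Perm.one_apply]
          exact fun hc => h3 hc.symm
        rcases key (s⁻¹ i) with ⟨h5, _⟩ | ⟨_, h5⟩
        · exact absurd h5 h4
        · rw [h5, mul_one]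
  ext1
  · -- left components
    show ((g : W Γ) * (h : W Γ)).left = ((h : W Γ) * (g : W Γ)).left
    rw [SemidirectProduct.mul_left, SemidirectProduct.mul_left]
    funext i
    have e1 : (permAction Γ s δ) i = δ (s⁻¹ i) := rfl
    have e2 : (permAction Γ t γ) i = γ (t⁻¹ i) := rfl
    show γ i * (permAction Γ s δ) i = δ i * (permAction Γ t γ) i
    rw [e1, e2]
    exact hleft i
  · show ((g : W Γ) * (h : W Γ)).right = ((h : W Γ) * (g : W Γ)).right
    rw [SemidirectProduct.mul_right, SemidirectProduct.mul_right]
    exact hright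

/-- `j` is not in the support of `(j k) g (j k)` when `k ∉ supp g`. -/
theorem not_mem_supp_swap_conj {g : WG Γ} {j k : ℕ} (hk : k ∉ supp g) :
    j ∉ supp (swapW j k * g * swapW j k) := by
  have hkr : (g : W Γ).right k = k := (not_mem_supp hk).1
  have hkl : (g : W Γ).left k = 1 := (not_mem_supp hk).2
  set s := Equiv.swap j k with hsdef
  set x := (g : W Γ) with hxdef
  have hcoe : ((swapW j k * g * swapW j k : WG Γ) : W Γ)
      = SemidirectProduct.inr s * x * SemidirectProduct.inr s := rfl
  have hleft : ((SemidirectProduct.inr s * x * SemidirectProduct.inr s : W Γ)).left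
      = permAction Γ s x.left := by
    simp [SemidirectProduct.mul_left, SemidirectProduct.left_inr, map_one]
  have hright : ((SemidirectProduct.inr s * x * SemidirectProduct.inr s : W Γ)).right
      = s * x.right * s := by
    simp [SemidirectProduct.mul_right, SemidirectProduct.right_inr, mul_assoc]
  intro hmem
  rcases hmem with h | h
  · rw [hcoe, hright] at h
    apply h
    show s ((x.right) (s j)) = j
    rw [hsdef]
    rw [Equiv.swap_apply_left]
    show Equiv.swap j k (x.right k) = j
    rw [hkr, Equiv.swap_apply_right]
  · rw [hcoe, hleft] at h
    apply h
    show x.left (s.symm j) = 1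
    rw [hsdef, Equiv.symm_swap, Equiv.swap_apply_left]
    exact hkl

end Aux

section Op

variable {Γ : Type*} [Group Γ]
variable {H : Type*} [NormedAddCommGroup H] [InnerProductSpace ℂ H] [CompleteSpace H]

theorem mem_commutant' {S : Set (H →L[ℂ] H)} {T : H →L[ℂ] H} :
    T ∈ commutant S ↔ ∀ A ∈ S, T * A = A * T := Iff.rfl

theorem commutant_anti {S S' : Set (H →L[ℂ] H)} (h : S ⊆ S') :
    commutant S' ⊆ commutant S :=
  fun _ hT A hA => hT A (h hA)

theorem subset_commutant_commutant (S : Set (H →L[ℂ] H)) : S ⊆ commutant (commutant S) :=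
  fun A hA B hB => (hB A hA).symm

theorem commutant_commutant_commutant (S : Set (H →L[ℂ] H)) :
    commutant (commutant (commutant S)) = commutant S :=
  Set.Subset.antisymm (commutant_anti (subset_commutant_commutant S))
    (subset_commutant_commutant (commutant S))

theorem mul_mem_commutant {S : Set (H →L[ℂ] H)} {T₁ T₂ : H →L[ℂ] H}
    (h1 : T₁ ∈ commutant S) (h2 : T₂ ∈ commutant S) : T₁ * T₂ ∈ commutant S := by
  intro A hA
  rw [mul_assoc, h2 A hA, ← mul_assoc, h1 A hA, mul_assoc]

theorem star_mem_commutant {S : Set (H →L[ℂ] H)} (hS : ∀ A ∈ S, star A ∈ S)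
    {T : H →L[ℂ] H} (hT : T ∈ commutant S) : star T ∈ commutant S := by
  intro A hA
  have h1 : T * star A = star A * T := hT (star A) (hS A hA)
  calc star T * A = star (star A * T) := by rw [star_mul, star_star]
  _ = star (T * star A) := by rw [← h1]
  _ = A * star T := by rw [star_mul, star_star]

variable {π : WG Γ →* (H →L[ℂ] H)}

theorem star_pi (hu : ∀ g : WG Γ, π g ∈ unitary (H →L[ℂ] H)) (g : WG Γ) :
    star (π g) = π g⁻¹ := by
  have h1 : star (π g) * π g = 1 := ((Unitary.mem_iff).mp (hu g)).1
  have h2 : π g * π g⁻¹ = 1 := by rw [← map_mul, mul_inv_cancel, map_one]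
  calc star (π g) = star (π g) * (π g * π g⁻¹) := by rw [h2, mul_one]
  _ = (star (π g) * π g) * π g⁻¹ := by rw [mul_assoc]
  _ = π g⁻¹ := by rw [h1, one_mul]

theorem adjoint_pi (hu : ∀ g : WG Γ, π g ∈ unitary (H →L[ℂ] H)) (g : WG Γ) :
    ContinuousLinearMap.adjoint (π g) = π g⁻¹ := by
  rw [← ContinuousLinearMap.star_eq_adjoint, star_pi hu]

theorem inner_mul_left_adj (B C : H →L[ℂ] H) (x y : H) :
    ⟪y, (B * C) x⟫ = ⟪ContinuousLinearMap.adjoint B y, C x⟫ :=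
  (ContinuousLinearMap.adjoint_inner_left B (C x) y).symm

/-- If `B` commutes with the transpositions `(i k)` for all large `k`, it commutes with the
asymptotic transposition `O i`. -/
theorem comm_O_of_eventually {O : ℕ → (H →L[ℂ] H)}
    (hO : ∀ (i : ℕ) (x y : H),
      Tendsto (fun k => ⟪y, π (swapW i k) x⟫) atTop (𝓝 ⟪y, O i x⟫))
    (i : ℕ) {B : H →L[ℂ] H}
    (hB : ∀ᶠ k in atTop, B * π (swapW i k) = π (swapW i k) * B) :
    B * O i = O i * B := by
  ext x
  refine ext_inner_left ℂ fun y => ?_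
  have h1 : Tendsto (fun k => ⟪ContinuousLinearMap.adjoint B y, π (swapW i k) x⟫)
      atTop (𝓝 ⟪ContinuousLinearMap.adjoint B y, O i x⟫) := hO i x _
  have h2 : Tendsto (fun k => ⟪y, π (swapW i k) (B x)⟫) atTop (𝓝 ⟪y, O i (B x)⟫) :=
    hO i (B x) y
  have h3 : (fun k => ⟪ContinuousLinearMap.adjoint B y, π (swapW i k) x⟫)
      =ᶠ[atTop] fun k => ⟪y, π (swapW i k) (B x)⟫ := by
    filter_upwards [hB] with k hk
    rw [← inner_mul_left_adj, hk]
    rfl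
  have h5 := tendsto_nhds_unique (h1.congr' h3) h2
  have h6 : ⟪y, (B * O i) x⟫ = ⟪ContinuousLinearMap.adjoint B y, O i x⟫ :=
    inner_mul_left_adj B (O i) x y
  rw [h6, h5]
  rfl

theorem pi_mem_vN (g : WG Γ) : π g ∈ vN π := fun B hB => (hB (π g) ⟨g, rfl⟩).symm

theorem O_mem_vN {O : ℕ → (H →L[ℂ] H)}
    (hO : ∀ (i : ℕ) (x y : H),
      Tendsto (fun k => ⟪y, π (swapW i k) x⟫) atTop (𝓝 ⟪y, O i x⟫))
    (i : ℕ) : O i ∈ vN π := by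
  intro B hB
  exact (comm_O_of_eventually hO i
    (Filter.Eventually.of_forall fun k => hB (π (swapW i k)) ⟨swapW i k, rfl⟩)).symm

/-- The generating set of `𝔄_j`. -/
def genSet (π : WG Γ →* (H →L[ℂ] H)) (O : H →L[ℂ] H) (j : ℕ) : Set (H →L[ℂ] H) :=
  {O} ∪ {T | ∃ γ : GammaE Γ, (∀ i, i ≠ j → (γ : ℕ → Γ) i = 1) ∧ T = π (seqW γ)}

theorem Aj_eq (π : WG Γ →* (H →L[ℂ] H)) (O : H →L[ℂ] H) (j : ℕ) :
    Aj π O j = commutant (commutant (genSet π O j)) := rfl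

theorem genSet_star (hu : ∀ g : WG Γ, π g ∈ unitary (H →L[ℂ] H))
    {O : H →L[ℂ] H} (hOsa : IsSelfAdjoint O) (j : ℕ) :
    ∀ A ∈ genSet π O j, star A ∈ genSet π O j := by
  rintro A (h | ⟨γ, hγ, rfl⟩)
  · rw [Set.mem_singleton_iff] at h
    subst h
    exact Or.inl (by rw [Set.mem_singleton_iff, hOsa])
  · refine Or.inr ⟨γ⁻¹, fun i hi => ?_, ?_⟩
    · show ((γ : ℕ → Γ) i)⁻¹ = 1
      rw [hγ i hi, inv_one]
    · rw [star_pi hu, seqW_inv]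

theorem star_mem_Aj (hu : ∀ g : WG Γ, π g ∈ unitary (H →L[ℂ] H))
    {O : H →L[ℂ] H} (hOsa : IsSelfAdjoint O) {j : ℕ} {V : H →L[ℂ] H}
    (hV : V ∈ Aj π O j) : star V ∈ Aj π O j :=
  star_mem_commutant (fun A hA => star_mem_commutant (genSet_star hu hOsa j) hA) hV

theorem mul_mem_Aj {O : H →L[ℂ] H} {j : ℕ} {V₁ V₂ : H →L[ℂ] H}
    (h1 : V₁ ∈ Aj π O j) (h2 : V₂ ∈ Aj π O j) : V₁ * V₂ ∈ Aj π O j :=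
  mul_mem_commutant h1 h2

theorem pi_mem_commutant_genSet
    {O : ℕ → (H →L[ℂ] H)}
    (hO : ∀ (i : ℕ) (x y : H),
      Tendsto (fun k => ⟪y, π (swapW i k) x⟫) atTop (𝓝 ⟪y, O i x⟫))
    {j : ℕ} {g : WG Γ} (hg : j ∉ supp g) :
    π g ∈ commutant (genSet π (O j) j) := by
  rintro A (h | ⟨γ, hγ, rfl⟩)
  · rw [Set.mem_singleton_iff] at h
    subst h
    apply comm_O_of_eventually hO j
    have hev : ∀ᶠ k in atTop, k ∉ supp g :=
      Nat.cofinite_eq_atTop ▸ (supp_finite g).eventually_cofinite_notMem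
    filter_upwards [hev] with k hk
    rw [← map_mul, ← map_mul]
    congr 1
    apply commute_of_disjoint
    intro i
    by_cases hi : i ∈ supp g
    · right
      intro hmem
      rcases supp_swapW j k hmem with h | h
      · exact hg (h ▸ hi)
      · rw [Set.mem_singleton_iff] at h
        exact hk (h ▸ hi)
    · left; exact hi
  · rw [← map_mul, ← map_mul]
    congr 1
    apply commute_of_disjoint
    intro i
    by_cases hi : i ∈ supp g
    · right
      intro hmem
      have h1 : (γ : ℕ → Γ) i ≠ 1 := supp_seqW γ hmem
      by_cases hij : i = j
      · exact hg (hij ▸ hi)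
      · exact h1 (hγ i hij)
    · left; exact hi

theorem commutant_commutant_vN :
    commutant (commutant (vN π)) = vN π := by
  show commutant (commutant (commutant (commutant (repSet π)))) = _
  rw [commutant_commutant_commutant]
  rfl

theorem Aj_subset_vN {O : ℕ → (H →L[ℂ] H)}
    (hO : ∀ (i : ℕ) (x y : H),
      Tendsto (fun k => ⟪y, π (swapW i k) x⟫) atTop (𝓝 ⟪y, O i x⟫))
    (j : ℕ) : Aj π (O j) j ⊆ vN π := by
  have h1 : genSet π (O j) j ⊆ vN π := by
    rintro A (h | ⟨γ, hγ, rfl⟩)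
    · rw [Set.mem_singleton_iff] at h
      subst h
      exact O_mem_vN hO j
    · exact pi_mem_vN _
  have h3 := commutant_anti (commutant_anti h1)
  rw [Aj_eq]
  exact fun T hT => commutant_commutant_vN (π := π) ▸ h3 hT

end Op




section RR

variable {Γ : Type*} [Group Γ]
variable {H : Type*} [NormedAddCommGroup H] [InnerProductSpace ℂ H] [CompleteSpace H]
variable {π : WG Γ →* (H →L[ℂ] H)}

theorem inner_pi_pi {φ : WG Γ → ℂ} {ξ : H} (hGNS : IsGNS φ π ξ) (a b : WG Γ) :
    ⟪π a ξ, π b ξ⟫ = φ (a⁻¹ * b) := by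
  have h1 : ⟪π a ξ, π b ξ⟫ = ⟪ξ, ContinuousLinearMap.adjoint (π a) (π b ξ)⟫ :=
    (ContinuousLinearMap.adjoint_inner_right (π a) ξ (π b ξ)).symm
  rw [h1, adjoint_pi hGNS.unitary, hGNS.inner_eq (a⁻¹ * b), map_mul]
  rfl

/-- The right translation operator `R_s` associated to a finite permutation `s`; it lies in the
commutant of `π(G)` and maps `π(g)ξ` to `π(g s)ξ`. -/
theorem exists_R {φ : WG Γ → ℂ} (hcentral : IsSCentral φ) {ξ : H}
    (hGNS : IsGNS φ π ξ) (s : SInf) :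
    ∃ R : H →L[ℂ] H, (∀ g : WG Γ, R (π g ξ) = π (g * permW s) ξ) ∧
      (∀ x y : H, ⟪R x, R y⟫ = ⟪x, y⟫) ∧ (∀ g : WG Γ, R * π g = π g * R) := by
  classical
  have hpair : ∀ a b : WG Γ,
      ⟪π (a * permW s) ξ, π (b * permW s) ξ⟫ = ⟪π a ξ, π b ξ⟫ := by
    intro a b
    rw [inner_pi_pi hGNS, inner_pi_pi hGNS]
    have h1 : (a * permW s)⁻¹ * (b * permW s)
        = (permW s)⁻¹ * (a⁻¹ * b) * permW s := by group
    rw [h1]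
    have h2 := hcentral s⁻¹ (a⁻¹ * b)
    rw [← permW_inv, inv_inv] at h2
    exact h2
  let L : (WG Γ →₀ ℂ) →ₗ[ℂ] H := Finsupp.linearCombination ℂ (fun g : WG Γ => π g ξ)
  let Ls : (WG Γ →₀ ℂ) →ₗ[ℂ] H :=
    Finsupp.linearCombination ℂ (fun g : WG Γ => π (g * permW s) ξ)
  have key : ∀ c d : WG Γ →₀ ℂ, ⟪Ls c, Ls d⟫ = ⟪L c, L d⟫ := by
    intro c d
    show ⟪Finsupp.linearCombination ℂ (fun g : WG Γ => π (g * permW s) ξ) c, _⟫ = _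
    rw [Finsupp.linearCombination_apply, Finsupp.linearCombination_apply,
      Finsupp.linearCombination_apply, Finsupp.linearCombination_apply,
      Finsupp.sum, Finsupp.sum, Finsupp.sum, Finsupp.sum, sum_inner, sum_inner]
    refine Finset.sum_congr rfl fun g _ => ?_
    rw [inner_sum, inner_sum]
    refine Finset.sum_congr rfl fun h _ => ?_
    simp only [inner_smul_left, inner_smul_right]
    rw [hpair g h]
  have hker : LinearMap.ker L ≤ LinearMap.ker Ls := by
    intro c hc
    rw [LinearMap.mem_ker] at hc ⊢
    rw [← inner_self_eq_zero (𝕜 := ℂ), key c c, hc, inner_zero_right]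
  have hDdense : Dense ((LinearMap.range L : Submodule ℂ H) : Set H) := by
    have : LinearMap.range L = Submodule.span ℂ (Set.range fun g : WG Γ => π g ξ) :=
      Finsupp.range_linearCombination ℂ (v := fun g : WG Γ => π g ξ)
    rw [this]
    exact hGNS.cyclic
  let e0 := L.quotKerEquivRange
  let ρ0 : ((WG Γ →₀ ℂ) ⧸ LinearMap.ker L) →ₗ[ℂ] H := (LinearMap.ker L).liftQ Ls hker
  let ρ : (LinearMap.range L : Submodule ℂ H) →ₗ[ℂ] H := ρ0.comp (e0.symm.toLinearMap)
  have hρ : ∀ c : WG Γ →₀ ℂ, ρ ⟨L c, LinearMap.mem_range_self L c⟩ = Ls c := by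
    intro c
    show ρ0 (e0.symm ⟨L c, LinearMap.mem_range_self L c⟩) = Ls c
    rw [LinearMap.quotKerEquivRange_symm_apply_image]
    exact Submodule.liftQ_apply _ Ls c
  have hρinner : ∀ a b : (LinearMap.range L : Submodule ℂ H),
      ⟪ρ a, ρ b⟫ = ⟪(a : H), (b : H)⟫ := by
    rintro ⟨av, hav⟩ ⟨bv, hbv⟩
    obtain ⟨c, rfl⟩ := hav
    obtain ⟨d, rfl⟩ := hbv
    have e1 : ρ ⟨L c, ⟨c, rfl⟩⟩ = Ls c := hρ c
    have e2 : ρ ⟨L d, ⟨d, rfl⟩⟩ = Ls d := hρ d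
    rw [e1, e2, key]
  have hρnorm : ∀ a : (LinearMap.range L : Submodule ℂ H), ‖ρ a‖ = ‖(a : H)‖ := by
    intro a
    rw [@norm_eq_sqrt_re_inner ℂ, @norm_eq_sqrt_re_inner ℂ, hρinner a a]
  let ρC : (LinearMap.range L : Submodule ℂ H) →L[ℂ] H :=
    ρ.mkContinuous 1 (fun a => by
      rw [hρnorm a, one_mul]
      exact le_of_eq rfl)
  have hrange : Set.range ⇑((LinearMap.range L : Submodule ℂ H).subtypeL)
      = ((LinearMap.range L : Submodule ℂ H) : Set H) := by
    ext z
    constructor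
    · rintro ⟨a, rfl⟩
      exact a.2
    · intro hz
      exact ⟨⟨z, hz⟩, rfl⟩
  have hdr : DenseRange ⇑((LinearMap.range L : Submodule ℂ H).subtypeL) := by
    unfold DenseRange
    rw [hrange]
    exact hDdense
  have hui : IsUniformInducing ⇑((LinearMap.range L : Submodule ℂ H).subtypeL) :=
    isUniformEmbedding_subtype_val.isUniformInducing
  let R : H →L[ℂ] H := ρC.extend ((LinearMap.range L : Submodule ℂ H).subtypeL)
  have hRD : ∀ a : (LinearMap.range L : Submodule ℂ H), R (a : H) = ρ a := by
    intro a
    exact ContinuousLinearMap.extend_eq ρC hdr hui a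
  have hR1 : ∀ g : WG Γ, R (π g ξ) = π (g * permW s) ξ := by
    intro g
    have hc : L (Finsupp.single g (1 : ℂ)) = π g ξ := by
      show Finsupp.linearCombination ℂ (fun g : WG Γ => π g ξ) (Finsupp.single g 1) = _
      rw [Finsupp.linearCombination_single, one_smul]
    have h1 : R (π g ξ) = ρ ⟨L (Finsupp.single g (1 : ℂ)),
        LinearMap.mem_range_self L _⟩ := by
      rw [← hc]
      exact hRD ⟨L (Finsupp.single g (1 : ℂ)), LinearMap.mem_range_self L _⟩
    rw [h1, hρ]
    show Finsupp.linearCombination ℂ (fun g : WG Γ => π (g * permW s) ξ)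
      (Finsupp.single g 1) = _
    rw [Finsupp.linearCombination_single, one_smul]
  have hRnorm : ∀ x : H, ‖R x‖ = ‖x‖ := by
    have hfeq : (fun x : H => ‖R x‖) = fun x : H => ‖x‖ := by
      refine Continuous.ext_on hDdense (continuous_norm.comp R.continuous)
        continuous_norm ?_
      intro xv hxv
      show ‖R xv‖ = ‖xv‖
      have h1 : R xv = ρ ⟨xv, hxv⟩ := hRD ⟨xv, hxv⟩
      rw [h1, hρnorm]
    exact fun x => congrFun hfeq x
  let RI : H →ₗᵢ[ℂ] H := ⟨R.toLinearMap, hRnorm⟩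
  have hR2 : ∀ x y : H, ⟪R x, R y⟫ = ⟪x, y⟫ := fun x y => RI.inner_map_map x y
  have hR3 : ∀ g : WG Γ, R * π g = π g * R := by
    intro g
    have hspan : ∀ xv ∈ Submodule.span ℂ (Set.range fun g' : WG Γ => π g' ξ),
        R (π g xv) = π g (R xv) := by
      intro xv hxv'
      induction hxv' using Submodule.span_induction with
      | mem x hx =>
        obtain ⟨h', rfl⟩ := hx
        have l1 : π g (π h' ξ) = π (g * h') ξ := by
          rw [map_mul]
          rfl
        rw [l1, hR1, hR1, map_mul, map_mul, map_mul]
        show (π g * π h' * π (permW s)) ξ = (π g * (π h' * π (permW s))) ξ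
        rw [mul_assoc]
      | zero => simp
      | add x y _ _ hx hy => simp [map_add, hx, hy]
      | smul c x _ hx => simp [map_smul, hx]
    have hfeq : (fun x : H => R (π g x)) = fun x : H => π g (R x) := by
      refine Continuous.ext_on hDdense (R.continuous.comp (π g).continuous)
        ((π g).continuous.comp R.continuous) ?_
      intro xv hxv
      have hxv' : xv ∈ Submodule.span ℂ (Set.range fun g' : WG Γ => π g' ξ) := by
        have heq : LinearMap.range L
            = Submodule.span ℂ (Set.range fun g' : WG Γ => π g' ξ) :=
          Finsupp.range_linearCombination ℂ (v := fun g' : WG Γ => π g' ξ)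
        rw [← heq]
        exact hxv
      exact hspan xv hxv'
    ext x
    exact congrFun hfeq x
  exact ⟨R, hR1, hR2, hR3⟩

end RR



section Wlim

variable {H : Type*} [NormedAddCommGroup H] [InnerProductSpace ℂ H] [CompleteSpace H]

/-- Weak operator limit along an ultrafilter of a uniformly bounded sequence of operators. -/
theorem exists_wlim (U : Ultrafilter ℕ) (A : ℕ → (H →L[ℂ] H)) {M : ℝ} (hM0 : 0 ≤ M)
    (hM : ∀ (k : ℕ) (x : H), ‖A k x‖ ≤ M * ‖x‖) :
    ∃ T : H →L[ℂ] H, ∀ x y : H,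
      Tendsto (fun k => ⟪y, A k x⟫) ↑U (𝓝 ⟪y, T x⟫) := by
  classical
  have hbound : ∀ (k : ℕ) (x y : H), ‖(⟪y, A k x⟫ : ℂ)‖ ≤ ‖y‖ * (M * ‖x‖) := by
    intro k x y
    calc ‖(⟪y, A k x⟫ : ℂ)‖ ≤ ‖y‖ * ‖A k x‖ := norm_inner_le_norm y (A k x)
    _ ≤ ‖y‖ * (M * ‖x‖) := mul_le_mul_of_nonneg_left (hM k x) (norm_nonneg y)
  have hex : ∀ x y : H, ∃ z : ℂ, Tendsto (fun k => ⟪y, A k x⟫) ↑U (𝓝 z) := by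
    intro x y
    have hc : IsCompact (Metric.closedBall (0 : ℂ) (‖y‖ * (M * ‖x‖))) :=
      isCompact_closedBall _ _
    have hmem : ∀ k : ℕ, (⟪y, A k x⟫ : ℂ) ∈ Metric.closedBall (0 : ℂ) (‖y‖ * (M * ‖x‖)) := by
      intro k
      rw [Metric.mem_closedBall, dist_zero_right]
      exact hbound k x y
    have hle : ↑(U.map fun k => (⟪y, A k x⟫ : ℂ))
        ≤ 𝓟 (Metric.closedBall (0 : ℂ) (‖y‖ * (M * ‖x‖))) := by
      rw [Filter.le_principal_iff]
      exact Filter.mem_map.mpr (Filter.univ_mem' hmem)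
    obtain ⟨z, _, hz⟩ := hc.ultrafilter_le_nhds (U.map _) hle
    refine ⟨z, ?_⟩
    rw [Filter.Tendsto, ← Ultrafilter.coe_map]
    exact hz
  let F : H → H → ℂ := fun y x => Classical.choose (hex x y)
  have hF : ∀ x y : H, Tendsto (fun k => ⟪y, A k x⟫) ↑U (𝓝 (F y x)) :=
    fun x y => Classical.choose_spec (hex x y)
  have hFy_add : ∀ x y y' : H, F (y + y') x = F y x + F y' x := by
    intro x y y'
    refine tendsto_nhds_unique (hF x (y + y')) ?_
    refine ((hF x y).add (hF x y')).congr fun k => ?_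
    rw [inner_add_left]
  have hFy_smul : ∀ (x : H) (c : ℂ) (y : H), F (c • y) x = (starRingEnd ℂ) c * F y x := by
    intro x c y
    refine tendsto_nhds_unique (hF x (c • y)) ?_
    refine ((hF x y).const_mul ((starRingEnd ℂ) c)).congr fun k => ?_
    rw [inner_smul_left]
  have hFbound : ∀ x y : H, ‖F y x‖ ≤ ‖y‖ * (M * ‖x‖) := by
    intro x y
    exact le_of_tendsto (hF x y).norm (Filter.Eventually.of_forall fun k => hbound k x y)
  have hfun : ∀ x : H, ∃ z : H, ∀ y, ⟪y, z⟫ = F y x := by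
    intro x
    let φl : H →ₗ[ℂ] ℂ :=
      { toFun := fun y => (starRingEnd ℂ) (F y x)
        map_add' := by
          intro y y'
          show (starRingEnd ℂ) (F (y + y') x) = _
          rw [hFy_add]
          exact map_add _ _ _
        map_smul' := by
          intro c y
          show (starRingEnd ℂ) (F (c • y) x) = _
          rw [hFy_smul]
          simp [map_mul] }
    have hφb : ∀ y, ‖φl y‖ ≤ (M * ‖x‖) * ‖y‖ := by
      intro y
      show ‖(starRingEnd ℂ) (F y x)‖ ≤ (M * ‖x‖) * ‖y‖
      rw [RingHomIsometric.norm_map]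
      calc ‖F y x‖ ≤ ‖y‖ * (M * ‖x‖) := hFbound x y
      _ = (M * ‖x‖) * ‖y‖ := mul_comm _ _
    let φC : H →L[ℂ] ℂ := φl.mkContinuous (M * ‖x‖) hφb
    refine ⟨(InnerProductSpace.toDual ℂ H).symm φC, fun y => ?_⟩
    have h := InnerProductSpace.toDual_symm_apply (𝕜 := ℂ) (E := H) (x := y) (y := φC)
    rw [← inner_conj_symm, h]
    show (starRingEnd ℂ) ((starRingEnd ℂ) (F y x)) = F y x
    exact Complex.conj_conj _
  choose z hz using hfun
  have hz_add : ∀ x x' : H, z (x + x') = z x + z x' := by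
    intro x x'
    refine ext_inner_left ℂ fun v => ?_
    rw [hz (x + x') v, inner_add_right, hz x v, hz x' v]
    refine tendsto_nhds_unique (hF (x + x') v) ?_
    refine ((hF x v).add (hF x' v)).congr fun k => ?_
    rw [← inner_add_right, ← map_add]
  have hz_smul : ∀ (c : ℂ) (x : H), z (c • x) = c • z x := by
    intro c x
    refine ext_inner_left ℂ fun v => ?_
    rw [hz (c • x) v, inner_smul_right, hz x v]
    refine tendsto_nhds_unique (hF (c • x) v) ?_
    refine ((hF x v).const_mul c).congr fun k => ?_
    rw [← inner_smul_right, ← map_smul]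
  have hz_bound : ∀ x : H, ‖z x‖ ≤ M * ‖x‖ := by
    intro x
    by_cases h0 : z x = 0
    · rw [h0, norm_zero]
      positivity
    · have h5 : ‖(⟪z x, z x⟫ : ℂ)‖ = ‖z x‖ * ‖z x‖ := by
        rw [inner_self_eq_norm_sq_to_K, norm_pow, RCLike.norm_ofReal,
          abs_of_nonneg (norm_nonneg _), sq]
      have h4 : ‖z x‖ * ‖z x‖ ≤ ‖z x‖ * (M * ‖x‖) := by
        rw [← h5, hz x (z x)]
        exact hFbound x (z x)
      exact (mul_le_mul_iff_right₀ (norm_pos_iff.mpr h0)).mp h4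
  let Tl : H →ₗ[ℂ] H := { toFun := z, map_add' := hz_add, map_smul' := hz_smul }
  refine ⟨Tl.mkContinuous M hz_bound, fun x y => ?_⟩
  have hTx : (Tl.mkContinuous M hz_bound) x = z x := rfl
  rw [hTx, hz x y]
  exact hF x y

end Wlim


theorem statement_15 {Γ : Type*} [Group Γ] {H : Type*} [NormedAddCommGroup H]
    [InnerProductSpace ℂ H] [CompleteSpace H]
    (φ : WG Γ → ℂ) (hstate : IsState φ) (hcentral : IsSCentral φ)
    (π : WG Γ →* (H →L[ℂ] H)) (ξ : H) (hGNS : IsGNS φ π ξ)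
    (hfact : IsFactorial π)
    (O : ℕ → (H →L[ℂ] H)) (hOsa : ∀ i, IsSelfAdjoint (O i))
    (hO : ∀ (i : ℕ) (x y : H),
      Tendsto (fun j => ⟪y, π (swapW i j) x⟫) atTop (𝓝 ⟪y, O i x⟫))
    (j : ℕ)
    (P₀ : H →L[ℂ] H) (hP₀sa : IsSelfAdjoint P₀) (hP₀proj : P₀ * P₀ = P₀)
    (hP₀range : LinearMap.range (P₀ : H →ₗ[ℂ] H) = LinearMap.ker (O j : H →ₗ[ℂ] H))
    (V : H →L[ℂ] H) (hV : V ∈ Aj π (O j) j)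
    (hVred : V = (1 - P₀) * V * (1 - P₀)) (hVξ : V ξ = 0) :
    V = 0 := by
  classical
  have hu := hGNS.unitary
  have hvsq : ∀ k : ℕ, swapW (Γ := Γ) j k * swapW j k = 1 := fun k => swapW_mul_self j k
  have hvinv : ∀ k : ℕ, (swapW (Γ := Γ) j k)⁻¹ = swapW j k := fun k => swapW_inv j k
  set A : H →L[ℂ] H := star V * V with hA
  have hAmem : A ∈ Aj π (O j) j := mul_mem_Aj (star_mem_Aj hu (hOsa j) hV) hV
  have hAvN : A ∈ vN π := Aj_subset_vN hO j hAmem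
  set Ak : ℕ → (H →L[ℂ] H) := fun k => π (swapW j k) * A * π (swapW j k) with hAk
  have hAknorm : ∀ (k : ℕ) (x : H), ‖Ak k x‖ ≤ ‖A‖ * ‖x‖ := by
    intro k x
    show ‖π (swapW j k) (A (π (swapW j k) x))‖ ≤ _
    rw [ContinuousLinearMap.norm_map_of_mem_unitary (hu _)]
    calc ‖A (π (swapW j k) x)‖ ≤ ‖A‖ * ‖π (swapW j k) x‖ := A.le_opNorm _
    _ = ‖A‖ * ‖x‖ := by rw [ContinuousLinearMap.norm_map_of_mem_unitary (hu _)]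
  set U : Ultrafilter ℕ := Ultrafilter.of atTop with hU
  have hUle : ↑U ≤ (atTop : Filter ℕ) := Ultrafilter.of_le atTop
  obtain ⟨T, hT⟩ := exists_wlim U Ak (norm_nonneg A) hAknorm
  have hAcomm : ∀ {g : WG Γ}, j ∉ supp g → A * π g = π g * A :=
    fun {g} hg => hAmem (π g) (pi_mem_commutant_genSet hO hg)
  -- T commutes with the representation
  have hTrep : ∀ g : WG Γ, T * π g = π g * T := by
    intro g
    ext x
    refine ext_inner_left ℂ fun y => ?_
    show ⟪y, T (π g x)⟫ = ⟪y, π g (T x)⟫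
    have h1 : Tendsto (fun k => ⟪y, Ak k (π g x)⟫) ↑U (𝓝 ⟪y, T (π g x)⟫) := hT (π g x) y
    have h2 : Tendsto (fun k => ⟪π g⁻¹ y, Ak k x⟫) ↑U (𝓝 ⟪π g⁻¹ y, T x⟫) := hT x (π g⁻¹ y)
    have h3 : ⟪π g⁻¹ y, T x⟫ = ⟪y, π g (T x)⟫ := by
      rw [← adjoint_pi hu g]
      exact ContinuousLinearMap.adjoint_inner_left (π g) (T x) y
    have hev : (fun k => ⟪y, Ak k (π g x)⟫) =ᶠ[(↑U : Filter ℕ)]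
        fun k => ⟪π g⁻¹ y, Ak k x⟫ := by
      have hev0 : ∀ᶠ k in (atTop : Filter ℕ), k ∉ supp g ∧ k ≠ j :=
        ((Nat.cofinite_eq_atTop ▸ (supp_finite g).eventually_cofinite_notMem).and
          (eventually_ne_atTop j))
      refine (hev0.filter_mono hUle).mono ?_
      rintro k ⟨hk1, _⟩
      have hg' : j ∉ supp (swapW j k * g * swapW j k) := not_mem_supp_swap_conj hk1
      have hAg' : A * π (swapW j k * g * swapW j k)
          = π (swapW j k * g * swapW j k) * A := hAcomm hg'
      have gid1 : swapW (Γ := Γ) j k * g = swapW j k * g * swapW j k * swapW j k := by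
        rw [mul_assoc (swapW j k * g) (swapW j k) (swapW j k), hvsq k, mul_one]
      have gid2 : swapW (Γ := Γ) j k * (swapW j k * g * swapW j k) = g * swapW j k := by
        rw [← mul_assoc, ← mul_assoc, hvsq k, one_mul]
      have e1 : π (swapW j k) * π g = π (swapW j k * g * swapW j k) * π (swapW j k) := by
        rw [← map_mul, ← map_mul, ← gid1]
      have e2 : π (swapW j k) * π (swapW j k * g * swapW j k) = π g * π (swapW j k) := by
        rw [← map_mul, ← map_mul, gid2]
      have hop : Ak k * π g = π g * Ak k := by
        show π (swapW j k) * A * π (swapW j k) * π g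
          = π g * (π (swapW j k) * A * π (swapW j k))
        simp only [mul_assoc]
        rw [e1, ← mul_assoc A, hAg', mul_assoc, ← mul_assoc (π (swapW j k)), e2, mul_assoc]
      calc ⟪y, Ak k (π g x)⟫ = ⟪y, (Ak k * π g) x⟫ := rfl
      _ = ⟪y, (π g * Ak k) x⟫ := by rw [hop]
      _ = ⟪π g⁻¹ y, Ak k x⟫ := by
          rw [← adjoint_pi hu g]
          exact (ContinuousLinearMap.adjoint_inner_left (π g) (Ak k x) y).symm
    have h4 := tendsto_nhds_unique (Filter.Tendsto.congr' hev h1) h2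
    rw [h4, h3]
  -- T is in the double commutant
  have hTvN : ∀ B ∈ commutant (repSet π), T * B = B * T := by
    intro B hB
    have hABk : ∀ k, Ak k * B = B * Ak k := by
      intro k
      have h1 : B * π (swapW j k) = π (swapW j k) * B := hB (π (swapW j k)) ⟨swapW j k, rfl⟩
      have h2 : A * B = B * A := hAvN B hB
      show π (swapW j k) * A * π (swapW j k) * B = B * (π (swapW j k) * A * π (swapW j k))
      simp only [mul_assoc]
      rw [← h1, ← mul_assoc A, h2, mul_assoc, ← mul_assoc (π (swapW j k)), ← h1, mul_assoc]
    ext x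
    refine ext_inner_left ℂ fun y => ?_
    show ⟪y, T (B x)⟫ = ⟪y, B (T x)⟫
    have h1 : Tendsto (fun k => ⟪y, Ak k (B x)⟫) ↑U (𝓝 ⟪y, T (B x)⟫) := hT (B x) y
    have h2 := hT x (ContinuousLinearMap.adjoint B y)
    have hev : (fun k => ⟪ContinuousLinearMap.adjoint B y, Ak k x⟫) =ᶠ[(↑U : Filter ℕ)]
        fun k => ⟪y, Ak k (B x)⟫ := by
      refine Filter.Eventually.of_forall fun k => ?_
      show ⟪ContinuousLinearMap.adjoint B y, Ak k x⟫ = ⟪y, Ak k (B x)⟫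
      rw [ContinuousLinearMap.adjoint_inner_left]
      show ⟪y, (B * Ak k) x⟫ = ⟪y, (Ak k * B) x⟫
      rw [hABk k]
    have h5 := tendsto_nhds_unique (Filter.Tendsto.congr' hev h2) h1
    rw [← h5, ContinuousLinearMap.adjoint_inner_left]
  obtain ⟨c, hc⟩ := hfact T
    ⟨fun Bb hBb => by obtain ⟨g, rfl⟩ := hBb; exact hTrep g, hTvN⟩
  -- the scalar is zero
  have hAkξ : ∀ k : ℕ, ⟪ξ, Ak k ξ⟫ = 0 := by
    intro k
    obtain ⟨R, hR1, hR2, hR3⟩ := exists_R hcentral hGNS ⟨Equiv.swap j k, swap_mem_SInf j k⟩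
    have hRξ : R ξ = π (swapW j k) ξ := by
      have h := hR1 1
      rw [map_one, one_mul] at h
      exact h
    have hRA : A * R = R * A := hAvN R (by
      rintro Bb ⟨g, rfl⟩
      exact hR3 g)
    have h1 : ⟪ξ, Ak k ξ⟫ = ⟪π (swapW j k) ξ, A (π (swapW j k) ξ)⟫ := by
      show ⟪ξ, π (swapW j k) (A (π (swapW j k) ξ))⟫ = _
      have h' : ⟪π ((swapW j k)⁻¹) ξ, A (π (swapW j k) ξ)⟫
          = ⟪ξ, π (swapW j k) (A (π (swapW j k) ξ))⟫ := by
        rw [← adjoint_pi hu (swapW j k)]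
        exact ContinuousLinearMap.adjoint_inner_left (π (swapW j k)) (A (π (swapW j k) ξ)) ξ
      rw [← h', hvinv k]
    rw [h1, ← hRξ]
    have h2 : A (R ξ) = R (A ξ) := by
      show (A * R) ξ = (R * A) ξ
      rw [hRA]
    rw [h2, hR2]
    show ⟪ξ, star V (V ξ)⟫ = 0
    rw [ContinuousLinearMap.star_eq_adjoint, ContinuousLinearMap.adjoint_inner_right,
      hVξ, inner_zero_left]
  have hTξ0 : ⟪ξ, T ξ⟫ = 0 := by
    have h1 := hT ξ ξ
    have h2 : (fun k => ⟪ξ, Ak k ξ⟫) = fun _ : ℕ => (0 : ℂ) := funext hAkξ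
    rw [h2] at h1
    exact tendsto_nhds_unique h1 tendsto_const_nhds
  have hc0 : c = 0 := by
    have h1 : ⟪ξ, T ξ⟫ = c := by
      rw [hc]
      show ⟪ξ, (c • (1 : H →L[ℂ] H)) ξ⟫ = c
      rw [ContinuousLinearMap.smul_apply, ContinuousLinearMap.one_apply, inner_smul_right,
        inner_self_eq_norm_sq_to_K, hGNS.norm_one]
      norm_num
    rw [← h1, hTξ0]
  have hT0 : T = 0 := by rw [hc, hc0, zero_smul]
  -- V ∘ O j = 0
  have hVO : ∀ x : H, V (O j x) = 0 := by
    intro x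
    have hTx : Tendsto (fun k => ⟪x, Ak k x⟫) ↑U (𝓝 0) := by
      have h := hT x x
      rw [hT0] at h
      simpa using h
    have hform : ∀ k : ℕ, (⟪x, Ak k x⟫ : ℂ) = ((‖V (π (swapW j k) x)‖ : ℝ) : ℂ) ^ 2 := by
      intro k
      have e1 : ⟪x, Ak k x⟫ = ⟪π (swapW j k) x, A (π (swapW j k) x)⟫ := by
        show ⟪x, π (swapW j k) (A (π (swapW j k) x))⟫ = _
        have h' : ⟪π ((swapW j k)⁻¹) x, A (π (swapW j k) x)⟫
            = ⟪x, π (swapW j k) (A (π (swapW j k) x))⟫ := by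
          rw [← adjoint_pi hu (swapW j k)]
          exact ContinuousLinearMap.adjoint_inner_left (π (swapW j k)) (A (π (swapW j k) x)) x
        rw [← h', hvinv k]
      rw [e1]
      show ⟪π (swapW j k) x, star V (V (π (swapW j k) x))⟫ = _
      rw [ContinuousLinearMap.star_eq_adjoint, ContinuousLinearMap.adjoint_inner_right,
        inner_self_eq_norm_sq_to_K]
      norm_cast
    have hreal : Tendsto (fun k => ‖V (π (swapW j k) x)‖ ^ 2) ↑U (𝓝 0) := by
      have h1 : Tendsto (fun k => ((‖V (π (swapW j k) x)‖ ^ 2 : ℝ) : ℂ)) ↑U (𝓝 0) := by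
        refine hTx.congr fun k => ?_
        rw [hform k]
        push_cast
        ring
      have h2 := (Complex.continuous_re.tendsto 0).comp h1
      rw [Complex.zero_re] at h2
      refine h2.congr fun k => ?_
      exact Complex.ofReal_re _
    have hsqrt : Tendsto (fun k => ‖V (π (swapW j k) x)‖) ↑U (𝓝 0) := by
      have h1 := (Real.continuous_sqrt.tendsto 0).comp hreal
      rw [Real.sqrt_zero] at h1
      refine h1.congr fun k => ?_
      exact Real.sqrt_sq (norm_nonneg _)
    have hlim : Tendsto (fun k => ⟪ContinuousLinearMap.adjoint V (V (O j x)), π (swapW j k) x⟫)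
        ↑U (𝓝 ⟪ContinuousLinearMap.adjoint V (V (O j x)), O j x⟫) :=
      (hO j x (ContinuousLinearMap.adjoint V (V (O j x)))).mono_left hUle
    have hle : ∀ k : ℕ, ‖(⟪ContinuousLinearMap.adjoint V (V (O j x)), π (swapW j k) x⟫ : ℂ)‖
        ≤ ‖V (O j x)‖ * ‖V (π (swapW j k) x)‖ := by
      intro k
      rw [ContinuousLinearMap.adjoint_inner_left]
      exact norm_inner_le_norm _ _
    have hub : ‖(⟪ContinuousLinearMap.adjoint V (V (O j x)), O j x⟫ : ℂ)‖ ≤ 0 := by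
      have h2 : Tendsto (fun k => ‖V (O j x)‖ * ‖V (π (swapW j k) x)‖) ↑U
          (𝓝 (‖V (O j x)‖ * 0)) := hsqrt.const_mul _
      rw [mul_zero] at h2
      exact le_of_tendsto_of_tendsto' hlim.norm h2 hle
    have hinner0 : (⟪ContinuousLinearMap.adjoint V (V (O j x)), O j x⟫ : ℂ) = 0 :=
      norm_le_zero_iff.mp hub
    have hww : (⟪V (O j x), V (O j x)⟫ : ℂ) = 0 := by
      rw [← hinner0, ContinuousLinearMap.adjoint_inner_left]
    exact inner_self_eq_zero.mp hww
  -- conclude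
  have hz : ∀ x : H, V ((1 - P₀) x) = 0 := by
    intro x
    have hadjP : ContinuousLinearMap.adjoint P₀ = P₀ := by
      rw [← ContinuousLinearMap.star_eq_adjoint]
      exact hP₀sa
    have hadjO : ContinuousLinearMap.adjoint (O j) = O j := by
      rw [← ContinuousLinearMap.star_eq_adjoint]
      exact hOsa j
    have hker_orth : (1 - P₀) x ∈ (LinearMap.ker (O j : H →ₗ[ℂ] H) : Submodule ℂ H)ᗮ := by
      rw [Submodule.mem_orthogonal]
      intro w hw
      rw [← hP₀range] at hw
      obtain ⟨w', rfl⟩ := hw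
      have h1 := ContinuousLinearMap.adjoint_inner_left P₀ ((1 - P₀) x) w'
      rw [hadjP] at h1
      rw [ContinuousLinearMap.coe_coe, h1]
      have h2 : P₀ ((1 - P₀) x) = 0 := by
        have h3 : (P₀ * (1 - P₀)) x = 0 := by
          rw [mul_sub, mul_one, hP₀proj, sub_self]
          rfl
        exact h3
      rw [h2, inner_zero_right]
    have hrange_orth : (LinearMap.range (O j : H →ₗ[ℂ] H) : Submodule ℂ H)ᗮ = LinearMap.ker (O j : H →ₗ[ℂ] H) := by
      ext w
      rw [Submodule.mem_orthogonal, LinearMap.mem_ker]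
      constructor
      · intro h
        have h2 := h (O j (O j w)) (LinearMap.mem_range_self _ _)
        have h3 := ContinuousLinearMap.adjoint_inner_left (O j) w (O j w)
        rw [hadjO] at h3
        rw [h3] at h2
        exact inner_self_eq_zero.mp h2
      · intro h u hu
        obtain ⟨u', rfl⟩ := hu
        have h3 := ContinuousLinearMap.adjoint_inner_left (O j) w u'
        rw [hadjO] at h3
        rw [ContinuousLinearMap.coe_coe] at h ⊢
        rw [h3, h, inner_zero_right]
    have hmemcl : (1 - P₀) x ∈ closure ((LinearMap.range (O j : H →ₗ[ℂ] H) : Submodule ℂ H) : Set H) := by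
      have h1 : (1 - P₀) x ∈ ((LinearMap.range (O j : H →ₗ[ℂ] H) : Submodule ℂ H)ᗮᗮ) := by
        rw [hrange_orth]
        exact hker_orth
      rw [Submodule.orthogonal_orthogonal_eq_closure] at h1
      rw [← Submodule.topologicalClosure_coe]
      exact h1
    have himg : V ((1 - P₀) x)
        ∈ closure (V '' ((LinearMap.range (O j : H →ₗ[ℂ] H) : Submodule ℂ H) : Set H)) :=
      image_closure_subset_closure_image V.continuous ⟨(1 - P₀) x, hmemcl, rfl⟩
    have himg0 : closure (V '' ((LinearMap.range (O j : H →ₗ[ℂ] H) : Submodule ℂ H) : Set H))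
        ⊆ ({0} : Set H) := by
      refine closure_minimal ?_ isClosed_singleton
      rintro _ ⟨u, hu, rfl⟩
      obtain ⟨u', rfl⟩ := hu
      exact Set.mem_singleton_iff.mpr (hVO u')
    exact himg0 himg
  ext x
  rw [hVred]
  show (1 - P₀) (V ((1 - P₀) x)) = (0 : H →L[ℂ] H) x
  rw [hz x, map_zero]
  rfl

end DN
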